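/- Let m ≥ 3, ε > 0, ρ > 0, p = 2m/(m−2), and u_ε(x) = (ε/(ε²+|x|²))^{(m−2)/2} on ℝ^m. Then ∫_{B(ρ)} |∇u_ε|² dx < m(m−2) ∫_{B(ρ)} u_ε^p dx. -/

import Mathlib

open MeasureTheory intervalIntegral

lemma hderiv (m : ℕ) (hm : 3 ≤ m) (ε : ℝ) (hε : 0 < ε) (r : ℝ) :
    HasDerivAt (fun r : ℝ => r ^ m / (ε ^ 2 + r ^ 2) ^ (m - 1))
      (((m : ℝ) * ε ^ 2 * r ^ (m - 1) - ((m : ℝ) - 2) * r ^ (m + 1)) / (ε ^ 2 + r ^ 2) ^ m) r := by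
  obtain ⟨k, rfl⟩ : ∃ k, m = k + 3 := ⟨m - 3, by omega⟩
  have hpos : 0 < ε ^ 2 + r ^ 2 := by positivity
  have h1 : HasDerivAt (fun r : ℝ => ε ^ 2 + r ^ 2) (2 * r) r := by
    simpa using (hasDerivAt_pow 2 r).const_add (ε ^ 2)
  have h2 := (hasDerivAt_pow (k + 3) r).div (h1.pow (k + 2)) (pow_ne_zero _ hpos.ne')
  refine h2.congr_deriv ?_
  have hne : (ε ^ 2 + r ^ 2) ≠ 0 := hpos.ne'
  have e1 : k + 3 - 1 = k + 2 := rfl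
  have e2 : k + 2 - 1 = k + 1 := rfl
  rw [e1] at *

  simp only [Pi.pow_apply]
  push_cast
  field_simp
  ring

lemma oneD (m : ℕ) (hm : 3 ≤ m) (ε : ℝ) (hε : 0 < ε) (ρ : ℝ) (hρ : 0 < ρ) :
    ((m : ℝ) - 2) * ∫ r in (0:ℝ)..ρ, r ^ (m + 1) / (ε ^ 2 + r ^ 2) ^ m <
      (m : ℝ) * ε ^ 2 * ∫ r in (0:ℝ)..ρ, r ^ (m - 1) / (ε ^ 2 + r ^ 2) ^ m := by
  have hc1 : Continuous fun r : ℝ => r ^ (m - 1) / (ε ^ 2 + r ^ 2) ^ m :=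
    Continuous.div (by continuity) (by continuity) (fun r => by positivity)
  have hc2 : Continuous fun r : ℝ => r ^ (m + 1) / (ε ^ 2 + r ^ 2) ^ m :=
    Continuous.div (by continuity) (by continuity) (fun r => by positivity)
  have hft : ∫ r in (0:ℝ)..ρ,
      (((m : ℝ) * ε ^ 2 * r ^ (m - 1) - ((m : ℝ) - 2) * r ^ (m + 1)) / (ε ^ 2 + r ^ 2) ^ m)
      = ρ ^ m / (ε ^ 2 + ρ ^ 2) ^ (m - 1) := by
    have := intervalIntegral.integral_eq_sub_of_hasDerivAt
      (f := fun r : ℝ => r ^ m / (ε ^ 2 + r ^ 2) ^ (m - 1))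
      (fun r _ => hderiv m hm ε hε r)
      (Continuous.intervalIntegrable (Continuous.div (by continuity) (by continuity)
        (fun r => by positivity)) 0 ρ)
    rw [this]
    rw [zero_pow (show m ≠ 0 by omega), zero_div, sub_zero]
  have hsplit : ∫ r in (0:ℝ)..ρ,
      (((m : ℝ) * ε ^ 2 * r ^ (m - 1) - ((m : ℝ) - 2) * r ^ (m + 1)) / (ε ^ 2 + r ^ 2) ^ m)
      = (m : ℝ) * ε ^ 2 * (∫ r in (0:ℝ)..ρ, r ^ (m - 1) / (ε ^ 2 + r ^ 2) ^ m)
        - ((m : ℝ) - 2) * ∫ r in (0:ℝ)..ρ, r ^ (m + 1) / (ε ^ 2 + r ^ 2) ^ m := by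
    rw [← intervalIntegral.integral_const_mul, ← intervalIntegral.integral_const_mul,
      ← intervalIntegral.integral_sub ((hc1.intervalIntegrable 0 ρ).const_mul _)
        ((hc2.intervalIntegrable 0 ρ).const_mul _)]
    congr 1; ext r
    have : (ε ^ 2 + r ^ 2) ^ m ≠ 0 := by positivity
    field_simp
  have hpos : 0 < ρ ^ m / (ε ^ 2 + ρ ^ 2) ^ (m - 1) := by positivity
  rw [hsplit] at hft
  linarith

lemma upow (m : ℕ) (hm : 3 ≤ m) (ε : ℝ) (hε : 0 < ε) (p : ℝ)
    (hp : p = 2 * m / ((m : ℝ) - 2)) (t : ℝ) (ht : 0 ≤ t) :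
    ((ε / (ε ^ 2 + t)) ^ (((m : ℝ) - 2) / 2)) ^ p = ε ^ m / (ε ^ 2 + t) ^ m := by
  have hD : 0 < ε ^ 2 + t := by positivity
  have hb : 0 < ε / (ε ^ 2 + t) := by positivity
  have hm2 : ((m : ℝ) - 2) ≠ 0 := by
    have : (3 : ℝ) ≤ m := by exact_mod_cast hm
    linarith
  rw [← Real.rpow_mul hb.le]
  have he : ((m : ℝ) - 2) / 2 * p = (m : ℕ) := by
    rw [hp]; field_simp
  rw [he, Real.rpow_natCast, div_pow]

lemma gsq (k : ℕ) (ε : ℝ) (hε : 0 < ε) (t : ℝ) (ht : 0 ≤ t) :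
    ((((k : ℝ) + 1) / 2) * (ε / (ε ^ 2 + t)) ^ ((((k : ℝ) + 1) / 2) - 1) *
        (-ε / (ε ^ 2 + t) ^ 2)) ^ 2 * (4 * t)
      = ((k : ℝ) + 1) ^ 2 * ε ^ (k + 1) * t / (ε ^ 2 + t) ^ (k + 3) := by
  have hD : 0 < ε ^ 2 + t := by positivity
  have hb : 0 < ε / (ε ^ 2 + t) := by positivity
  set b := ε / (ε ^ 2 + t) with hbdef
  have h1 : b ^ ((((k : ℝ) + 1) / 2) - 1) = b ^ (((k : ℝ) + 1) / 2) / b := by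
    rw [Real.rpow_sub hb, Real.rpow_one]
  have h2 : (b ^ (((k : ℝ) + 1) / 2)) ^ 2 = b ^ (k + 1 : ℕ) := by
    rw [← Real.rpow_natCast (b ^ (((k : ℝ) + 1) / 2)) 2, ← Real.rpow_mul hb.le]
    have : ((k : ℝ) + 1) / 2 * (2 : ℕ) = ((k + 1 : ℕ) : ℝ) := by push_cast; ring
    rw [this, Real.rpow_natCast]
  have hbk : b ^ (k + 1 : ℕ) = ε ^ (k + 1) / (ε ^ 2 + t) ^ (k + 1) := div_pow _ _ _
  have hbne : b ≠ 0 := hb.ne'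
  have hDne : (ε ^ 2 + t) ≠ 0 := hD.ne'
  rw [h1]
  rw [mul_pow, mul_pow, div_pow (b ^ (((k : ℝ) + 1) / 2)) b 2, h2, hbk, hbdef]
  field_simp
  ring

set_option synthInstance.maxHeartbeats 1000000 in
lemma grad_sq (m : ℕ) (hm : 3 ≤ m) (ε : ℝ) (hε : 0 < ε)
    (u : EuclideanSpace ℝ (Fin m) → ℝ)
    (hu : ∀ x, u x = (ε / (ε ^ 2 + ‖x‖ ^ 2)) ^ (((m : ℝ) - 2) / 2))
    (x : EuclideanSpace ℝ (Fin m)) :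
    ‖fderiv ℝ u x‖ ^ 2 =
      ((m : ℝ) - 2) ^ 2 * ε ^ (m - 2) * ‖x‖ ^ 2 / (ε ^ 2 + ‖x‖ ^ 2) ^ m := by
  obtain ⟨k, rfl⟩ : ∃ k, m = k + 3 := ⟨m - 3, by omega⟩
  set t := ‖x‖ ^ 2 with htdef
  have ht : 0 ≤ t := sq_nonneg _
  have hD : 0 < ε ^ 2 + t := by positivity
  have hb : 0 < ε / (ε ^ 2 + t) := by positivity
  set α : ℝ := ((k : ℝ) + 1) / 2 with hαdef
  have hα : (((k + 3 : ℕ) : ℝ) - 2) / 2 = α := by push_cast; ring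
  -- derivative of the inner function s ↦ ε / (ε² + s)
  have h0 : HasDerivAt (fun s : ℝ => ε ^ 2 + s) 1 t := (hasDerivAt_id t).const_add (ε ^ 2)
  have hdiv : HasDerivAt (fun s : ℝ => ε / (ε ^ 2 + s)) (-ε / (ε ^ 2 + t) ^ 2) t := by
    have := (hasDerivAt_const t ε).div h0 hD.ne'
    refine this.congr_deriv ?_
    ring
  -- derivative of rpow
  have hrp : HasDerivAt (fun y : ℝ => y ^ α) (α * (ε / (ε ^ 2 + t)) ^ (α - 1))
      (ε / (ε ^ 2 + t)) := Real.hasDerivAt_rpow_const (Or.inl hb.ne')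
  have hg : HasDerivAt (fun s : ℝ => (ε / (ε ^ 2 + s)) ^ α)
      (α * (ε / (ε ^ 2 + t)) ^ (α - 1) * (-ε / (ε ^ 2 + t) ^ 2)) t := by
    have := hrp.comp t hdiv
    exact this
  -- fderiv of norm squared
  have hq : HasFDerivAt (fun y : EuclideanSpace ℝ (Fin (k + 3)) => ‖y‖ ^ 2)
      (2 • (innerSL ℝ x)) x := (hasStrictFDerivAt_norm_sq x).hasFDerivAt
  set g' : ℝ := α * (ε / (ε ^ 2 + t)) ^ (α - 1) * (-ε / (ε ^ 2 + t) ^ 2) with hg'def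
  have hU : HasFDerivAt u (g' • (2 • (innerSL ℝ x))) x := by
    have h := hg.comp_hasFDerivAt x hq
    have : u = (fun s : ℝ => (ε / (ε ^ 2 + s)) ^ α) ∘ (fun y => ‖y‖ ^ 2) := by
      funext y
      rw [hu y, hα]
      rfl
    rw [this]
    exact h
  rw [hU.fderiv]
  have hnorm : ‖g' • (2 • (innerSL ℝ x))‖ = |g'| * (2 * ‖x‖) := by
    rw [← Nat.cast_smul_eq_nsmul ℝ 2, smul_smul,
      norm_smul (g' * ((2 : ℕ) : ℝ)) ((innerSL ℝ) x), Real.norm_eq_abs,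
      innerSL_apply_norm, abs_mul]
    norm_num
    ring
  rw [hnorm]
  have hgs := gsq k ε hε t ht
  calc (|g'| * (2 * ‖x‖)) ^ 2 = g' ^ 2 * (4 * t) := by rw [mul_pow, sq_abs, htdef]; ring
    _ = ((k : ℝ) + 1) ^ 2 * ε ^ (k + 1) * t / (ε ^ 2 + t) ^ (k + 3) := hgs
    _ = (((k + 3 : ℕ) : ℝ) - 2) ^ 2 * ε ^ (k + 3 - 2) * ‖x‖ ^ 2 / (ε ^ 2 + ‖x‖ ^ 2) ^ (k + 3) := by
        rw [← htdef]
        have : k + 3 - 2 = k + 1 := rfl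
        rw [this]
        push_cast
        ring

lemma ball_radial (m : ℕ) (hm : 3 ≤ m) (ρ : ℝ) (hρ : 0 < ρ) (G : ℝ → ℝ) :
    ∫ x in Metric.ball (0 : EuclideanSpace ℝ (Fin m)) ρ, G ‖x‖
      = (m * (volume (Metric.ball (0 : EuclideanSpace ℝ (Fin m)) 1)).toReal) *
        ∫ r in (0:ℝ)..ρ, r ^ (m - 1) * G r := by
  haveI : Nontrivial (EuclideanSpace ℝ (Fin m)) :=
    Module.nontrivial_of_finrank_pos (R := ℝ) (by rw [finrank_euclideanSpace_fin]; omega)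
  have h1 : ∫ x in Metric.ball (0 : EuclideanSpace ℝ (Fin m)) ρ, G ‖x‖
      = ∫ x : EuclideanSpace ℝ (Fin m), (Set.Iio ρ).indicator G ‖x‖ := by
    rw [← MeasureTheory.integral_indicator measurableSet_ball]
    congr 1; funext x
    by_cases hx : ‖x‖ < ρ
    · rw [Set.indicator_of_mem (by simpa [mem_ball_zero_iff] using hx)]
      exact (Set.indicator_of_mem (Set.mem_Iio.2 hx) G).symm
    · rw [Set.indicator_of_notMem (by simpa [mem_ball_zero_iff] using hx)]
      exact (Set.indicator_of_notMem (by simpa using hx) G).symm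
  rw [h1, MeasureTheory.integral_fun_norm_addHaar volume ((Set.Iio ρ).indicator G)]
  rw [finrank_euclideanSpace_fin]
  rw [nsmul_eq_mul, smul_eq_mul, ← mul_assoc]
  congr 1
  have e : ∀ y : ℝ, y ^ (m - 1) • (Set.Iio ρ).indicator G y
      = (Set.Iio ρ).indicator (fun r => r ^ (m - 1) * G r) y := by
    intro y
    by_cases h : y ∈ Set.Iio ρ
    · rw [Set.indicator_of_mem h, Set.indicator_of_mem h, smul_eq_mul]
    · rw [Set.indicator_of_notMem h, Set.indicator_of_notMem h, smul_zero]
  simp only [e]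
  rw [MeasureTheory.integral_indicator measurableSet_Iio, Measure.restrict_restrict measurableSet_Iio,
    Set.Iio_inter_Ioi, intervalIntegral.integral_of_le hρ.le,
    ← MeasureTheory.integral_Ioc_eq_integral_Ioo]

/-- Strict Dirichlet energy bound on balls for the Aubin–Talenti bubble:
`∫_{B(ρ)} |∇u_ε|² dx < m(m−2) ∫_{B(ρ)} u_ε^p dx` with `p = 2m/(m−2)`. -/
theorem stmt_13 (m : ℕ) (hm : 3 ≤ m) (ε : ℝ) (hε : 0 < ε) (ρ : ℝ) (hρ : 0 < ρ) (p : ℝ)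
    (hp : p = 2 * m / ((m : ℝ) - 2))
    (u : EuclideanSpace ℝ (Fin m) → ℝ)
    (hu : ∀ x, u x = (ε / (ε ^ 2 + ‖x‖ ^ 2)) ^ (((m : ℝ) - 2) / 2)) :
    (∫ x in Metric.ball (0 : EuclideanSpace ℝ (Fin m)) ρ, ‖fderiv ℝ u x‖ ^ 2) <
      (m : ℝ) * ((m : ℝ) - 2) *
        ∫ x in Metric.ball (0 : EuclideanSpace ℝ (Fin m)) ρ, u x ^ p := by
  set c : ℝ := m * (volume (Metric.ball (0 : EuclideanSpace ℝ (Fin m)) 1)).toReal with hc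
  have hcp : 0 < c := by
    apply mul_pos (by positivity)
    exact ENNReal.toReal_pos (Metric.measure_ball_pos volume _ one_pos).ne'
      (MeasureTheory.measure_ball_lt_top).ne
  have hm2 : (0:ℝ) < (m : ℝ) - 2 := by
    have : (3:ℝ) ≤ m := by exact_mod_cast hm
    linarith
  -- left side
  have hupt : ∀ x : EuclideanSpace ℝ (Fin m), u x ^ p = ε ^ m / (ε ^ 2 + ‖x‖ ^ 2) ^ m :=
    fun x => by rw [hu x]; exact upow m hm ε hε p hp (‖x‖ ^ 2) (sq_nonneg _)
  have hL : (∫ x in Metric.ball (0 : EuclideanSpace ℝ (Fin m)) ρ, ‖fderiv ℝ u x‖ ^ 2)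
      = c * (((m : ℝ) - 2) ^ 2 * ε ^ (m - 2) *
          ∫ r in (0:ℝ)..ρ, r ^ (m + 1) / (ε ^ 2 + r ^ 2) ^ m) := by
    simp only [grad_sq m hm ε hε u hu]
    rw [ball_radial m hm ρ hρ
      (fun r => ((m : ℝ) - 2) ^ 2 * ε ^ (m - 2) * r ^ 2 / (ε ^ 2 + r ^ 2) ^ m)]
    rw [← hc]
    congr 1
    rw [← intervalIntegral.integral_const_mul]
    congr 1
    funext r
    have hr : r ^ (m + 1) = r ^ (m - 1) * r ^ 2 := by rw [← pow_add]; congr 1; omega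
    rw [mul_div_assoc, ← mul_assoc, hr]
    ring
  have hR : (∫ x in Metric.ball (0 : EuclideanSpace ℝ (Fin m)) ρ, u x ^ p)
      = c * (ε ^ m * ∫ r in (0:ℝ)..ρ, r ^ (m - 1) / (ε ^ 2 + r ^ 2) ^ m) := by
    simp only [hupt]
    rw [ball_radial m hm ρ hρ (fun r => ε ^ m / (ε ^ 2 + r ^ 2) ^ m)]
    rw [← hc]
    congr 1
    rw [← intervalIntegral.integral_const_mul]
    congr 1
    funext r
    ring
  rw [hL, hR]
  have key := oneD m hm ε hε ρ hρ
  have hεm : ε ^ m = ε ^ (m - 2) * ε ^ 2 := by rw [← pow_add]; congr 1; omega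
  have hmain := mul_lt_mul_of_pos_left key
    (mul_pos (mul_pos hcp hm2) (pow_pos hε (m - 2)))
  rw [hεm]
  nlinarith [hmain]
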